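/- For every c ≥ 0 there exists m such that every maximal triangle-free graph G on n vertices with more than t(n,2) - c·n edges has at most m twin classes (equivalently, G is a blow-up of a triangle-free graph on at most m vertices). -/

import Mathlib

set_option maxHeartbeats 1000000

section Aux
open Finset

private lemma card_even_range (N : ℕ) :
    #((Finset.range N).filter (fun i => i % 2 = 0)) = (N + 1) / 2 := by
  induction N with
  | zero => simp
  | succ k ih =>
    rw [Finset.range_add_one, Finset.filter_insert]
    split
    · rw [Finset.card_insert_of_notMem (by simp), ih]; omega
    · rw [ih]; omega

private lemma card_even_fin (n : ℕ) :
    #((Finset.univ : Finset (Fin n)).filter (fun v : Fin n => (v : ℕ) % 2 = 0)) = (n + 1) / 2 := by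
  rw [Finset.card_filter, Fin.sum_univ_eq_sum_range (fun i => if i % 2 = 0 then 1 else 0) n,
    ← Finset.card_filter, card_even_range]

private lemma card_odd_fin (n : ℕ) :
    #((Finset.univ : Finset (Fin n)).filter (fun v : Fin n => (v : ℕ) % 2 = 1)) = n / 2 := by
  have h := card_filter_add_card_filter_not (s := (Finset.univ : Finset (Fin n)))
    (fun v : Fin n => (v : ℕ) % 2 = 0)
  have h2 : ((Finset.univ : Finset (Fin n)).filter (fun v : Fin n => ¬ (v : ℕ) % 2 = 0)) =
      ((Finset.univ : Finset (Fin n)).filter (fun v : Fin n => (v : ℕ) % 2 = 1)) := by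
    apply Finset.filter_congr; intro x _; constructor <;> omega
  rw [card_even_fin, h2, Finset.card_univ, Fintype.card_fin] at h
  omega

private lemma turanEdges_two (n : ℕ) :
    n ^ 2 ≤ 4 * #(SimpleGraph.turanGraph n 2).edgeFinset + 1 := by
  classical
  set G := SimpleGraph.turanGraph n 2 with hG
  have hdeg : ∀ v : Fin n, G.degree v = if (v : ℕ) % 2 = 0 then n / 2 else (n + 1) / 2 := by
    intro v
    rw [SimpleGraph.degree, SimpleGraph.neighborFinset_eq_filter]
    by_cases hv : (v : ℕ) % 2 = 0
    · rw [if_pos hv, ← card_odd_fin n]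
      congr 1
      apply Finset.filter_congr; intro x _
      show ¬ (v:ℕ) % 2 = (x:ℕ) % 2 ↔ _
      omega
    · rw [if_neg hv, ← card_even_fin n]
      congr 1
      apply Finset.filter_congr; intro x _
      show ¬ (v:ℕ) % 2 = (x:ℕ) % 2 ↔ _
      omega
  have hsum := G.sum_degrees_eq_twice_card_edges
  have hsum2 : ∑ v : Fin n, G.degree v = ((n+1)/2) * (n/2) + (n/2) * ((n+1)/2) := by
    have h2 : ((Finset.univ : Finset (Fin n)).filter (fun v : Fin n => ¬ (v : ℕ) % 2 = 0)) =
        ((Finset.univ : Finset (Fin n)).filter (fun v : Fin n => (v : ℕ) % 2 = 1)) := by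
      apply Finset.filter_congr; intro x _; constructor <;> omega
    rw [Finset.sum_congr rfl (fun v _ => hdeg v), Finset.sum_ite, Finset.sum_const,
      Finset.sum_const, smul_eq_mul, smul_eq_mul, card_even_fin, h2, card_odd_fin]
  rw [hsum2] at hsum
  rcases Nat.even_or_odd n with ⟨k, hk⟩ | ⟨k, hk⟩
  · subst hk
    have e1 : (k + k + 1) / 2 = k := by omega
    have e2 : (k + k) / 2 = k := by omega
    rw [e1, e2] at hsum
    nlinarith [hsum]
  · subst hk
    have e1 : (2 * k + 1 + 1) / 2 = k + 1 := by omega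
    have e2 : (2 * k + 1) / 2 = k := by omega
    rw [e1, e2] at hsum
    nlinarith [hsum]


variable {n : ℕ} (G : SimpleGraph (Fin n)) [DecidableRel G.Adj]

private lemma card_pairs :
    #((Finset.univ : Finset (Fin n × Fin n)).filter (fun p => G.Adj p.1 p.2)) =
      ∑ v : Fin n, G.degree v := by
  rw [Finset.card_filter, Fintype.sum_prod_type]
  refine Finset.sum_congr rfl fun a _ => ?_
  rw [← Finset.card_filter]
  rw [SimpleGraph.degree, SimpleGraph.neighborFinset_eq_filter]

private lemma sum_pairs_fst :
    ∑ p ∈ (Finset.univ : Finset (Fin n × Fin n)).filter (fun p => G.Adj p.1 p.2),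
      G.degree p.1 = ∑ v : Fin n, G.degree v * G.degree v := by
  rw [Finset.sum_filter, Fintype.sum_prod_type]
  simp only [show ∀ (a b : Fin n), ((a,b) : Fin n × Fin n).1 = a from fun _ _ => rfl,
    show ∀ (a b : Fin n), ((a,b) : Fin n × Fin n).2 = b from fun _ _ => rfl]
  refine Finset.sum_congr rfl fun a _ => ?_
  rw [← Finset.sum_filter]
  rw [Finset.sum_const_nat (m := G.degree a) (fun _ _ => rfl)]
  rw [SimpleGraph.degree, SimpleGraph.neighborFinset_eq_filter]

private lemma sum_pairs_snd :
    ∑ p ∈ (Finset.univ : Finset (Fin n × Fin n)).filter (fun p => G.Adj p.1 p.2),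
      G.degree p.2 = ∑ v : Fin n, G.degree v * G.degree v := by
  rw [Finset.sum_filter, Fintype.sum_prod_type, Finset.sum_comm]
  simp only [show ∀ (a b : Fin n), ((a,b) : Fin n × Fin n).1 = a from fun _ _ => rfl,
    show ∀ (a b : Fin n), ((a,b) : Fin n × Fin n).2 = b from fun _ _ => rfl]
  refine Finset.sum_congr rfl fun b _ => ?_
  rw [← Finset.sum_filter]
  rw [Finset.sum_const_nat (m := G.degree b) (fun _ _ => rfl)]
  have : (Finset.univ : Finset (Fin n)).filter (fun a => G.Adj a b) =
      (Finset.univ : Finset (Fin n)).filter (fun a => G.Adj b a) := by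
    apply Finset.filter_congr; intro x _; exact ⟨fun h => h.symm, fun h => h.symm⟩
  rw [this, SimpleGraph.degree, SimpleGraph.neighborFinset_eq_filter]

private lemma sum_pairs_deg :
    ∑ p ∈ (Finset.univ : Finset (Fin n × Fin n)).filter (fun p => G.Adj p.1 p.2),
      (G.degree p.1 + G.degree p.2) = 2 * ∑ v : Fin n, G.degree v * G.degree v := by
  rw [Finset.sum_add_distrib, sum_pairs_fst, sum_pairs_snd]; ring

end Aux


/-- Number of edges of the Turán graph `T(n,r)`. -/
noncomputable def turanEdges (n r : ℕ) : ℕ := (SimpleGraph.turanGraph n r).edgeSet.ncard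

/-- `G` is maximal triangle-free: triangle-free, but adding any missing edge creates a
triangle. -/
def MaximalTriangleFree {V : Type*} (G : SimpleGraph V) : Prop :=
  G.CliqueFree 3 ∧ ∀ u v : V, u ≠ v → ¬ G.Adj u v →
    ¬ (G ⊔ SimpleGraph.fromEdgeSet {s(u, v)}).CliqueFree 3


section Aux2
open Finset
private lemma common_neighbor {V : Type*} [DecidableEq V] {G : SimpleGraph V}
    (hG : MaximalTriangleFree G) {u v : V} (hne : u ≠ v) (hnadj : ¬ G.Adj u v) :
    ∃ x, G.Adj u x ∧ G.Adj v x := by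
  have h := hG.2 u v hne hnadj
  rw [SimpleGraph.CliqueFree] at h
  push_neg at h
  obtain ⟨t, ht⟩ := h
  set G' := G ⊔ SimpleGraph.fromEdgeSet {s(u, v)} with hG'
  -- every pair in t is G-adjacent or equals {u,v}
  have hpair : ∀ x ∈ t, ∀ y ∈ t, x ≠ y → G.Adj x y ∨ s(x, y) = s(u, v) := by
    intro x hx y hy hxy
    have := ht.1 hx hy hxy
    rw [hG', SimpleGraph.sup_adj, SimpleGraph.fromEdgeSet_adj] at this
    rcases this with h | ⟨h, _⟩
    · exact Or.inl h
    · exact Or.inr (by simpa using h)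
  -- some pair equals {u,v}
  have hsome : u ∈ t ∧ v ∈ t := by
    by_contra hcon
    refine hG.1 t ⟨?_, ht.2⟩
    intro x hx y hy hxy
    rcases hpair x hx y hy hxy with h | h
    · exact h
    · exfalso
      rw [Sym2.eq_iff] at h
      rcases h with ⟨rfl, rfl⟩ | ⟨rfl, rfl⟩
      · exact hcon ⟨hx, hy⟩
      · exact hcon ⟨hy, hx⟩
  obtain ⟨hu, hv⟩ := hsome
  have hsub : ({u, v} : Finset V) ⊆ t := by
    intro x hx; rcases Finset.mem_insert.1 hx with rfl | hx
    · exact hu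
    · exact (Finset.mem_singleton.1 hx) ▸ hv
  have hcard : #(t \ {u, v}) = 1 := by
    rw [Finset.card_sdiff_of_subset hsub, ht.2, Finset.card_insert_of_notMem (by simpa using hne),
      Finset.card_singleton]
  obtain ⟨z, hz⟩ := Finset.card_eq_one.1 hcard
  have hzmem : z ∈ t ∧ z ≠ u ∧ z ≠ v := by
    have : z ∈ t \ {u, v} := hz ▸ Finset.mem_singleton_self z
    simp only [Finset.mem_sdiff, Finset.mem_insert, Finset.mem_singleton] at this
    tauto
  obtain ⟨hzt, hzu, hzv⟩ := hzmem
  refine ⟨z, ?_, ?_⟩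
  · rcases hpair u hu z hzt (Ne.symm hzu) with h | h
    · exact h
    · exfalso; rw [Sym2.eq_iff] at h; tauto
  · rcases hpair v hv z hzt (Ne.symm hzv) with h | h
    · exact h
    · exfalso; rw [Sym2.eq_iff] at h
      rcases h with ⟨h1, h2⟩ | ⟨h1, h2⟩
      · exact hne h1.symm
      · exact hzu h2.symm.symm

private lemma decode_neighborSet {n : ℕ} {G : SimpleGraph (Fin n)} [DecidableRel G.Adj]
    (hG : MaximalTriangleFree G) {u v a : Fin n} (huv : G.Adj u v) (hua : G.Adj u a)
    (W : Finset (Fin n)) (hW : ∀ x, x ∈ W ↔ ¬ G.Adj u x ∧ ¬ G.Adj v x) :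
    G.neighborSet a = ↑(G.neighborFinset a ∩ W) ∪
      {x | G.Adj v x ∧ ∀ w ∈ G.neighborFinset a ∩ W, ¬ G.Adj w x} := by
  have hT : ∀ x y z : Fin n, G.Adj x y → G.Adj x z → G.Adj y z → False := fun x y z h1 h2 h3 =>
    hG.1 {x, y, z} (SimpleGraph.is3Clique_triple_iff.2 ⟨h1, h2, h3⟩)
  ext x
  simp only [SimpleGraph.mem_neighborSet, Set.mem_union, Finset.coe_inter, Set.mem_inter_iff,
    Finset.mem_coe, SimpleGraph.mem_neighborFinset, Set.mem_setOf_eq, Finset.mem_inter]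
  constructor
  · intro hax
    by_cases hw : x ∈ W
    · exact Or.inl ⟨hax, hw⟩
    · rw [hW, not_and_or, not_not, not_not] at hw
      rcases hw with hux | hvx
      · exact absurd hax (fun h => hT u a x hua hux h)
      · refine Or.inr ⟨hvx, fun w hwm hwx => ?_⟩
        exact hT a w x hwm.1 hax hwx
  · rintro (⟨hax, _⟩ | ⟨hvx, hall⟩)
    · exact hax
    · by_contra hax
      have hne : a ≠ x := by
        rintro rfl
        exact hT u v a huv hua hvx
      obtain ⟨z, haz, hxz⟩ := common_neighbor hG hne hax
      have hzu : ¬ G.Adj u z := fun h => hT u a z hua h haz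
      have hzv : ¬ G.Adj v z := fun h => hT v x z hvx h hxz
      exact hall z ⟨haz, (hW z).2 ⟨hzu, hzv⟩⟩ hxz.symm

end Aux2

open Finset in
theorem maximal_triangle_free_bounded_twin_classes (c : ℝ) (hc : 0 ≤ c) :
    ∃ m : ℕ, ∀ n : ℕ, ∀ G : SimpleGraph (Fin n), MaximalTriangleFree G →
      (turanEdges n 2 : ℝ) - c * n < (G.edgeSet.ncard : ℝ) →
      (Set.range G.neighborSet).ncard ≤ m := by
  classical
  set c' : ℝ := c + 1 with hc'
  set t : ℕ := ⌈4 * c'⌉₊ with ht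
  refine ⟨2 ^ t + 2 ^ t + t, fun n G hG hE => ?_⟩
  letI : DecidableRel G.Adj := Classical.decRel _
  by_cases hn : n ≤ 2 ^ t + 2 ^ t + t
  · refine le_trans ?_ hn
    rw [← Set.image_univ]
    refine le_trans (Set.ncard_image_le (Set.toFinite _)) ?_
    rw [Set.ncard_univ]
    simp
  push_neg at hn
  have hn0 : (0:ℝ) < n := by
    have : 0 < n := lt_of_le_of_lt (Nat.zero_le _) hn
    exact_mod_cast this
  have hn1 : (1:ℝ) ≤ n := by exact_mod_cast lt_of_le_of_lt (Nat.zero_le _) hn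
  -- triangle helper
  have hT : ∀ x y z : Fin n, G.Adj x y → G.Adj x z → G.Adj y z → False := fun x y z h1 h2 h3 =>
    hG.1 {x, y, z} (SimpleGraph.is3Clique_triple_iff.2 ⟨h1, h2, h3⟩)
  -- edge counts
  have hTeq : turanEdges n 2 = #(SimpleGraph.turanGraph n 2).edgeFinset := by
    rw [turanEdges, ← SimpleGraph.coe_edgeFinset, Set.ncard_coe_finset]
  have hge : G.edgeSet.ncard = #G.edgeFinset := by
    rw [← SimpleGraph.coe_edgeFinset, Set.ncard_coe_finset]
  set e : ℕ := #G.edgeFinset with he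
  have hTreal : ((n:ℝ)^2 - 1) / 4 ≤ (turanEdges n 2 : ℝ) := by
    have := turanEdges_two n
    rw [← hTeq] at this
    have : ((n:ℝ))^2 ≤ 4 * (turanEdges n 2 : ℝ) + 1 := by exact_mod_cast this
    linarith
  have he1 : (n:ℝ)^2 / 4 - c' * n < e := by
    rw [hge] at hE
    have : (turanEdges n 2 : ℝ) - c * n < e := hE
    nlinarith [hTreal, hn1, hc]
  have htc : 4 * c' ≤ (t:ℝ) := Nat.le_ceil _
  have hnt : (t:ℝ) < n := by
    have : t < n := lt_of_le_of_lt (Nat.le_add_left t _) hn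
    exact_mod_cast this
  have hnc : 4 * c' < n := lt_of_le_of_lt htc hnt
  have he0 : (0:ℝ) < e := by nlinarith [he1, hn0, hnc]
  -- find a dominating edge
  set P := (Finset.univ : Finset (Fin n × Fin n)).filter (fun p => G.Adj p.1 p.2) with hP
  set dR : Fin n → ℝ := fun v => (G.degree v : ℝ) with hdR
  have hcardP : #P = 2 * e := by rw [hP, card_pairs, he, G.sum_degrees_eq_twice_card_edges]
  have hQr : 4 * (e:ℝ)^2 ≤ (n:ℝ) * ∑ v : Fin n, dR v * dR v := by
    have hcs := sq_sum_le_card_mul_sum_sq (s := (Finset.univ : Finset (Fin n))) (f := dR)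
    have hcongr : ∑ v : Fin n, dR v ^ 2 = ∑ v : Fin n, dR v * dR v :=
      Finset.sum_congr rfl fun v _ => by rw [pow_two]
    have hds : ∑ v : Fin n, dR v = 2 * (e:ℝ) := by
      rw [hdR, he]
      beta_reduce
      exact_mod_cast congrArg (Nat.cast (R := ℝ)) (G.sum_degrees_eq_twice_card_edges)
    rw [hcongr, hds, Finset.card_univ, Fintype.card_fin] at hcs
    nlinarith [hcs]
  have key : ∃ p ∈ P, ((n:ℝ) - 4*c') < (dR p.1 + dR p.2) := by
    apply Finset.exists_lt_of_sum_lt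
    have hrhs : ∑ p ∈ P, (dR p.1 + dR p.2) = 2 * ∑ v : Fin n, dR v * dR v := by
      rw [hP, hdR]
      beta_reduce
      exact_mod_cast congrArg (Nat.cast (R := ℝ)) (sum_pairs_deg G)
    rw [hrhs, Finset.sum_const, hcardP, nsmul_eq_mul]
    push_cast
    have h4 : (n:ℝ) * ((n:ℝ) - 4*c') < 4 * e := by nlinarith [he1]
    have h5 : 2*(e:ℝ)*((n:ℝ)*((n:ℝ) - 4*c')) < 2*(e:ℝ)*(4*(e:ℝ)) :=
      mul_lt_mul_of_pos_left h4 (by positivity)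
    have h6 : (n:ℝ) * (2*(e:ℝ)*((n:ℝ) - 4*c')) <
        (n:ℝ) * (2 * ∑ v : Fin n, dR v * dR v) := by nlinarith [h5, hQr]
    exact lt_of_mul_lt_mul_left h6 (le_of_lt hn0)
  obtain ⟨p, hpP, hp⟩ := key
  set u := p.1 with hu
  set v := p.2 with hv
  have huv : G.Adj u v := (Finset.mem_filter.1 hpP).2
  set W := (Finset.univ : Finset (Fin n)).filter
    (fun x : Fin n => ¬ G.Adj u x ∧ ¬ G.Adj v x) with hW
  have hWiff : ∀ x, x ∈ W ↔ ¬ G.Adj u x ∧ ¬ G.Adj v x := by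
    intro x; rw [hW]; simp
  have hdisj : Disjoint (G.neighborFinset u) (G.neighborFinset v) := by
    rw [Finset.disjoint_left]
    intro x hx hy
    exact hT u v x huv ((SimpleGraph.mem_neighborFinset G u x).1 hx) ((SimpleGraph.mem_neighborFinset G v x).1 hy)
  have hWc : W = (G.neighborFinset u ∪ G.neighborFinset v)ᶜ := by
    ext x
    simp [hWiff x, not_or]
  have hle : G.degree u + G.degree v ≤ n := by
    show #(G.neighborFinset u) + #(G.neighborFinset v) ≤ n
    rw [← Finset.card_union_of_disjoint hdisj]
    calc #(G.neighborFinset u ∪ G.neighborFinset v) ≤ #(Finset.univ : Finset (Fin n)) :=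
      Finset.card_le_univ _
    _ = n := by simp
  have hWcard : #W = n - (G.degree u + G.degree v) := by
    rw [hWc, Finset.card_compl, Finset.card_union_of_disjoint hdisj, Fintype.card_fin]
    rfl
  have hWt : #W ≤ t := by
    have hcast : (#W : ℝ) = (n:ℝ) - (dR u + dR v) := by
      rw [hdR]
      rw [hWcard, Nat.cast_sub hle]
      push_cast
      ring
    have : (#W : ℝ) < 4 * c' := by rw [hcast]; linarith [hp]
    have : (#W : ℝ) < (t:ℝ) := lt_of_lt_of_le this htc
    exact le_of_lt (by exact_mod_cast this)
  -- decoding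
  set Dec : Fin n → Finset (Fin n) → Set (Fin n) :=
    fun y S => ↑S ∪ {x | G.Adj y x ∧ ∀ w ∈ S, ¬ G.Adj w x} with hDec
  have hsub : Set.range G.neighborSet ⊆
      ((Dec v '' ↑W.powerset) ∪ (Dec u '' ↑W.powerset)) ∪ (G.neighborSet '' ↑W) := by
    rintro _ ⟨a, rfl⟩
    by_cases h1 : G.Adj u a
    · refine Or.inl (Or.inl ⟨G.neighborFinset a ∩ W, ?_, ?_⟩)
      · rw [Finset.mem_coe, Finset.mem_powerset]
        exact Finset.inter_subset_right
      · exact (decode_neighborSet hG huv h1 W hWiff).symm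
    by_cases h2 : G.Adj v a
    · refine Or.inl (Or.inr ⟨G.neighborFinset a ∩ W, ?_, ?_⟩)
      · rw [Finset.mem_coe, Finset.mem_powerset]
        exact Finset.inter_subset_right
      · exact (decode_neighborSet hG huv.symm h2 W
          (fun x => by rw [hWiff x]; exact and_comm)).symm
    · exact Or.inr ⟨a, Finset.mem_coe.2 ((hWiff a).2 ⟨h1, h2⟩), rfl⟩
  refine le_trans (Set.ncard_le_ncard hsub (Set.toFinite _)) ?_
  refine le_trans (Set.ncard_union_le _ _) ?_
  have hpow : ∀ y : Fin n, (Dec y '' ↑W.powerset).ncard ≤ 2 ^ t := by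
    intro y
    refine le_trans (Set.ncard_image_le (Set.toFinite _)) ?_
    rw [Set.ncard_coe_finset, Finset.card_powerset]
    exact Nat.pow_le_pow_right (by norm_num) hWt
  have hZ : (G.neighborSet '' ↑W).ncard ≤ t := by
    refine le_trans (Set.ncard_image_le (Set.toFinite _)) ?_
    rw [Set.ncard_coe_finset]
    exact hWt
  have hXY : ((Dec v '' ↑W.powerset) ∪ (Dec u '' ↑W.powerset)).ncard ≤ 2 ^ t + 2 ^ t :=
    le_trans (Set.ncard_union_le _ _) (add_le_add (hpow v) (hpow u))
  omega
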